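/- Let X be δ-hyperbolic, upper Gromov product bounded by above, with visual metric d_x^ε. Suppose v ∈ ∂X is a radial limit point: there are C' > 0 and γ_n ∈ Γ with γ_n x → v and d(γ_n x, x) − (γ_n x, v)_x ≤ C'. Then there is a constant C > 0 such that for all n with d(x, γ_n x) ≥ 1, d_x^ε(v, w_x^{γ_n x}) ≤ C · d(x, γ_n x)^{ε/α} · e^{−ε d(x, γ_n x)}, i.e., γ_n x lies in the weak nontangential approach domain Ω_C(v). -/
import Mathlib


open Real

/-- a radial limit point is approached inside a weak nontangential
approach domain: if `d(γ_n x, x) − (γ_n x, v)_x ≤ C'` then there is `C > 0` with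
`d_x^ε(v, w_x^{γ_n x}) ≤ C · d(x, γ_n x)^{ε/α} · e^{−ε d(x, γ_n x)}`
whenever `d(x, γ_n x) ≥ 1`. -/
theorem stmt4 {X B : Type*} [MetricSpace X] (δ c ε cm α : ℝ)
    (hδ : 0 ≤ δ) (hc : 0 < c) (hε : 0 < ε) (hcm : 0 < cm) (hα : 0 < α)
    (x : X)
    -- extended Gromov product on `X ∪ ∂X` with basepoint `x`
    (gp : (X ⊕ B) → (X ⊕ B) → ℝ)
    (hint : ∀ (y z : X),
      gp (Sum.inl y) (Sum.inl z) = (dist x y + dist x z - dist y z) / 2)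
    (hsym : ∀ a b : X ⊕ B, gp a b = gp b a)
    (hhyp : ∀ a b c' : X ⊕ B, gp a b ≥ min (gp a c') (gp c' b) - 2 * δ)
    -- upper Gromov product bounded by above, witnessed by `w`
    (w : X → B)
    (hw : ∀ y : X, gp (Sum.inl y) (Sum.inr (w y)) ≥ dist x y - c)
    -- visual metric of parameter ε on the boundary
    (dv : B → B → ℝ)
    (hdv0 : ∀ v : B, dv v v = 0)
    (hdv : ∀ v u : B, v ≠ u →
      cm⁻¹ * exp (-ε * gp (Sum.inr v) (Sum.inr u)) ≤ dv v u ∧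
      dv v u ≤ cm * exp (-ε * gp (Sum.inr v) (Sum.inr u)))
    -- `v` is a radial limit point: the orbit points `z n = γ_n x` satisfy
    -- `d(x, z n) − (z n, v)_x ≤ C'`
    (v : B) (C' : ℝ) (hC' : 0 < C') (z : ℕ → X)
    (hz : ∀ n, dist x (z n) - gp (Sum.inl (z n)) (Sum.inr v) ≤ C') :
    ∃ C > 0, ∀ n, 1 ≤ dist x (z n) →
      dv v (w (z n)) ≤ C * dist x (z n) ^ (ε / α) * exp (-ε * dist x (z n)) := by
  refine ⟨cm * exp (ε * (C' + c + 2 * δ)), by positivity, fun n hn => ?_⟩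
  set d := dist x (z n) with hd
  have hd1 : (1:ℝ) ≤ d := hn
  have hrp : (1:ℝ) ≤ d ^ (ε / α) :=
    Real.one_le_rpow hd1 (by positivity)
  have key : gp (Sum.inr v) (Sum.inr (w (z n))) ≥ d - (C' + c + 2 * δ) := by
    have h1 := hhyp (Sum.inr v) (Sum.inr (w (z n))) (Sum.inl (z n))
    have h2 : gp (Sum.inr v) (Sum.inl (z n)) ≥ d - C' := by
      have := hz n
      rw [hsym]
      linarith
    have h3 := hw (z n)
    have hmin : min (gp (Sum.inr v) (Sum.inl (z n)))
        (gp (Sum.inl (z n)) (Sum.inr (w (z n)))) ≥ d - (C' + c) := by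
      rcases min_cases (gp (Sum.inr v) (Sum.inl (z n)))
        (gp (Sum.inl (z n)) (Sum.inr (w (z n)))) with ⟨h, _⟩ | ⟨h, _⟩ <;>
        rw [h] <;> [linarith; linarith]
    linarith
  rcases eq_or_ne v (w (z n)) with he | he
  · rw [← he, hdv0]
    positivity
  · have h4 := (hdv v (w (z n)) he).2
    have h5 : exp (-ε * gp (Sum.inr v) (Sum.inr (w (z n)))) ≤
        exp (ε * (C' + c + 2 * δ)) * exp (-ε * d) := by
      rw [← Real.exp_add]
      apply Real.exp_le_exp.2
      nlinarith [key]
    calc dv v (w (z n)) ≤ cm * exp (-ε * gp (Sum.inr v) (Sum.inr (w (z n)))) := h4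
      _ ≤ cm * (exp (ε * (C' + c + 2 * δ)) * exp (-ε * d)) := by
          exact mul_le_mul_of_nonneg_left h5 hcm.le
      _ ≤ cm * exp (ε * (C' + c + 2 * δ)) * d ^ (ε / α) * exp (-ε * d) := by
          rw [mul_assoc, mul_assoc]
          apply mul_le_mul_of_nonneg_left _ hcm.le
          apply mul_le_mul_of_nonneg_left _ (Real.exp_pos _).le
          nlinarith [Real.exp_pos (-ε * d)]
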